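/- Let R ⊆ Ã be integral domains which are finitely generated algebras over a field k, with Krull dimension of R equal to 1 and Krull dimension of Ã equal to 2, and let I be an ideal of Ã such that the composite map R → Ã → Ã/I is injective and makes Ã/I a finitely generated R-module. Then the subring A = R + I of Ã is a finitely generated k-algebra, and Ã is a finitely generated A-module. -/
import Mathlib


/-!
`Ã` is an integral domain, finitely generated over a field `k`, of Krull dimension `2`;
`R ⊆ Ã` is a `k`-subalgebra which is finitely generated over `k` and of Krull dimension
`1`; `I` is an ideal of `Ã` such that the composite `R → Ã → Ã/I` is injective and makes
`Ã/I` a finitely generated `R`-module.  Then the subring `A = R + I` of `Ã` is a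
finitely generated `k`-algebra, and `Ã` is a finitely generated `A`-module.
-/

/-- Lemma on glueing. -/
theorem statement9 (k : Type) [Field k]
    (Atilde : Type) [CommRing Atilde] [IsDomain Atilde] [Algebra k Atilde]
    (hAfg : Algebra.FiniteType k Atilde)
    (hAdim : ringKrullDim Atilde = 2)
    (R : Subalgebra k Atilde)
    (hRfg : Algebra.FiniteType k R)
    (hRdim : ringKrullDim R = 1)
    (I : Ideal Atilde)
    (hinj : Function.Injective
      ((Ideal.Quotient.mk I).comp (R.subtype : R →+* Atilde)))
    (hfinquot : Module.Finite R (Atilde ⧸ I))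
    (A : Subalgebra k Atilde)
    (hA : ∀ x : Atilde, x ∈ A ↔ ∃ r ∈ R, ∃ y ∈ I, x = r + y) :
    Algebra.FiniteType k A ∧ Module.Finite A Atilde := by
  -- `R ≤ A` and `I ≤ A`
  have hRA : ∀ r : Atilde, r ∈ R → r ∈ A := fun r hr =>
    (hA r).2 ⟨r, hr, 0, I.zero_mem, (add_zero r).symm⟩
  have hIA : ∀ y : Atilde, y ∈ I → y ∈ A := fun y hy =>
    (hA y).2 ⟨0, R.zero_mem, y, hy, (zero_add y).symm⟩
  -- `Ã` is a finite `A`-module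
  have hfin : Module.Finite A Atilde := by
    classical
    obtain ⟨s, hs⟩ := hfinquot.1
    -- lift the generators of `Ã/I` to `Ã`
    have hsurj : ∀ z : Atilde ⧸ I, ∃ x : Atilde, Ideal.Quotient.mk I x = z :=
      Ideal.Quotient.mk_surjective
    choose lift hlift using hsurj
    refine ⟨⟨insert 1 (s.image lift), ?_⟩⟩
    rw [eq_top_iff]
    rintro x -
    have hx : Ideal.Quotient.mk I x ∈ Submodule.span R (s : Set (Atilde ⧸ I)) := by
      rw [hs]; trivial
    rw [Submodule.mem_span_set'] at hx
    obtain ⟨n, f, g, hfg⟩ := hx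
    -- the error term lies in `I ⊆ A`
    have herr : x - ∑ i, (f i : Atilde) * lift (g i) ∈ I := by
      rw [← Ideal.Quotient.eq_zero_iff_mem, map_sub, map_sum]
      have : ∀ i, Ideal.Quotient.mk I ((f i : Atilde) * lift (g i)) = f i • (g i : Atilde ⧸ I) := by
        intro i
        conv_rhs => rw [← hlift (↑(g i))]
        rw [← Ideal.Quotient.mk_eq_mk, ← Ideal.Quotient.mk_eq_mk,
          ← Submodule.Quotient.mk_smul]
        congr 1
      simp only [this, hfg, sub_self]
    have : x = (⟨_, hIA _ herr⟩ : A) • (1 : Atilde)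
        + ∑ i, (⟨(f i : Atilde), hRA _ (f i).2⟩ : A) • lift (g i) := by
      show x = (x - ∑ i, (f i : Atilde) * lift (g i)) * 1
        + ∑ i, (f i : Atilde) * lift (g i)
      ring
    rw [this]
    refine Submodule.add_mem _ (Submodule.smul_mem _ _ (Submodule.subset_span ?_))
      (Submodule.sum_mem _ fun i _ => Submodule.smul_mem _ _ (Submodule.subset_span ?_))
    · simp
    · simp only [Finset.coe_insert, Set.mem_insert_iff, Finset.coe_image, Set.mem_image]
      exact Or.inr ⟨g i, (g i).2, rfl⟩
  refine ⟨?_, hfin⟩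
  -- Artin–Tate
  have htop : (⊤ : Subalgebra k A).FG :=
    fg_of_fg_of_fg k A Atilde hAfg.1 hfin.1 Subtype.val_injective
  exact ⟨htop⟩
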